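/- Let R = ℂ[z,z⁻¹] be the Laurent polynomial ring, let M be a nonzero R-module, and let (M_i)_{i∈ℤ} be ℂ-subspaces of M forming an internal direct sum decomposition M = ⊕_{i∈ℤ} M_i such that z·M_i ⊆ M_{i+2} for all i. Call an R-submodule N of M homogeneous if N = ⊕_{i∈ℤ} (N ∩ M_i). Assume M has no homogeneous R-submodule other than 0 and M. Then: (a) for every i ∈ ℤ and every nonzero m ∈ M_i, the map R → M, p ↦ p·m, is an isomorphism of R-modules; (b) there exists i₀ ∈ {0,1} such that M_j = 0 for every j not congruent to i₀ modulo 2. -/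

import Mathlib

open LaurentPolynomial

section Aux

variable {M : Type} [AddCommGroup M] [Module (LaurentPolynomial ℂ) M]
  [Module ℂ M] [IsScalarTower ℂ (LaurentPolynomial ℂ) M]
  {Mi : ℤ → Submodule ℂ M}

lemma aux_T_smul (a b : ℤ) (m : M) :
    (T a : LaurentPolynomial ℂ) • (T b : LaurentPolynomial ℂ) • m
      = (T (a + b) : LaurentPolynomial ℂ) • m := by
  rw [← mul_smul, ← T_add]

lemma aux_T_cancel (a : ℤ) (m : M) :
    (T (-a) : LaurentPolynomial ℂ) • (T a : LaurentPolynomial ℂ) • m = m := by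
  rw [aux_T_smul, neg_add_cancel, T_zero, one_smul]

/-- Uniqueness of homogeneous decompositions. -/
lemma aux_unique (hind : iSupIndep Mi) (f : ℤ →₀ M) (hf : ∀ j, f j ∈ Mi j)
    (hsum : (f.sum fun _ v => v) = 0) : ∀ j, f j = 0 := by
  intro j
  have herase : ((f.erase j).sum fun _ v => v) ∈ ⨆ (k) (_ : k ≠ j), Mi k := by
    apply Submodule.sum_mem
    intro k hk
    have hkj : k ≠ j := by
      have := Finsupp.support_erase (a := j) (f := f) ▸ hk
      exact Finset.ne_of_mem_erase this
    rw [Finsupp.erase_ne hkj]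
    exact Submodule.mem_iSup_of_mem k (Submodule.mem_iSup_of_mem hkj (hf k))
  have hfj : f j = -((f.erase j).sum fun _ v => v) := by
    have h1 := Finsupp.add_sum_erase' f j (fun _ v => v) (fun _ => rfl)
    rw [hsum] at h1
    exact eq_neg_of_add_eq_zero_left h1
  exact Submodule.disjoint_def.mp (hind j) (f j) (hf j)
    (hfj ▸ neg_mem herase)

end Aux

section Aux2

set_option linter.unusedSectionVars false

variable {M : Type} [AddCommGroup M] [Module (LaurentPolynomial ℂ) M]
  [Module ℂ M] [IsScalarTower ℂ (LaurentPolynomial ℂ) M]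
  {Mi : ℤ → Submodule ℂ M}

/-- Key component-vanishing lemma. -/
lemma aux_key (hind : iSupIndep Mi) (f : ℤ →₀ M) (e : ℤ ↪ ℤ)
    (hf : ∀ n, f n ∈ Mi (e n)) (j : ℤ) (x : M) (hx : x ∈ Mi j)
    (hsum : (f.sum fun _ v => v) = x) : ∀ n, e n ≠ j → f n = 0 := by
  classical
  set g : ℤ →₀ M := f.embDomain e - Finsupp.single j x with hg
  have hgmem : ∀ k, g k ∈ Mi k := by
    intro k
    rw [hg, Finsupp.sub_apply]
    by_cases h : ∃ n, e n = k
    · obtain ⟨n, rfl⟩ := h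
      rw [Finsupp.embDomain_apply_self]
      by_cases he : e n = j
      · rw [he, Finsupp.single_eq_same]
        exact sub_mem (he ▸ hf n) hx
      · rw [Finsupp.single_eq_of_ne' (fun hh => he hh.symm), sub_zero]
        exact hf n
    · rw [Finsupp.embDomain_notin_range _ _ _ (by simpa using h)]
      by_cases hk : k = j
      · subst hk
        rw [Finsupp.single_eq_same, zero_sub]
        exact neg_mem hx
      · rw [Finsupp.single_eq_of_ne' (fun hh => hk hh.symm), sub_zero]
        exact zero_mem _
  have hgsum : (g.sum fun _ v => v) = 0 := by
    rw [hg, Finsupp.sum_sub_index (fun _ _ _ => rfl), Finsupp.sum_embDomain, hsum,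
      Finsupp.sum_single_index rfl, sub_self]
  have hzero := aux_unique hind g hgmem hgsum
  intro n hn
  have := hzero (e n)
  rw [hg, Finsupp.sub_apply, Finsupp.embDomain_apply_self,
    Finsupp.single_eq_of_ne' (fun hh => hn hh.symm), sub_zero] at this
  exact this

/-- Decomposition existence. -/
lemma aux_decomp (hdecomp : DirectSum.IsInternal Mi) (x : M) :
    ∃ f : ℤ →₀ M, (∀ j, f j ∈ Mi j) ∧ (f.sum fun _ v => v) = x := by
  have hx : x ∈ ⨆ i, Mi i := hdecomp.submodule_iSup_eq_top ▸ Submodule.mem_top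
  exact (Submodule.mem_iSup_iff_exists_finsupp Mi x).mp hx

/-- If T 1 • y is homogeneous of degree i, then y is homogeneous of degree i - 2. -/
lemma aux_neg (hdecomp : DirectSum.IsInternal Mi)
    (hz : ∀ i : ℤ, ∀ m ∈ Mi i, (T 1 : LaurentPolynomial ℂ) • m ∈ Mi (i + 2))
    (i : ℤ) (y : M) (hy : (T 1 : LaurentPolynomial ℂ) • y ∈ Mi i) : y ∈ Mi (i - 2) := by
  obtain ⟨f, hf, hsum⟩ := aux_decomp hdecomp y
  set g : ℤ →₀ M := f.mapRange (fun v => (T 1 : LaurentPolynomial ℂ) • v) (smul_zero _) with hg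
  have hgmem : ∀ n, g n ∈ Mi (n + 2) := fun n => by
    rw [hg, Finsupp.mapRange_apply]; exact hz n (f n) (hf n)
  have hgsum : (g.sum fun _ v => v) = (T 1 : LaurentPolynomial ℂ) • y := by
    rw [hg, Finsupp.sum_mapRange_index (fun _ => rfl), ← hsum, Finsupp.smul_sum]
  have hkey := aux_key hdecomp.submodule_iSupIndep g ⟨fun n => n + 2, add_left_injective 2⟩ hgmem i _ hy hgsum
  have hfzero : ∀ n, n ≠ i - 2 → f n = 0 := by
    intro n hn
    have h1 : g n = 0 := hkey n (by simpa using (by omega : n + 2 ≠ i))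
    rw [hg, Finsupp.mapRange_apply] at h1
    have := congrArg (fun v => (T (-1) : LaurentPolynomial ℂ) • v) h1
    simpa [aux_T_cancel] using this
  have hfs : f = Finsupp.single (i - 2) (f (i - 2)) := by
    ext k
    by_cases hk : k = i - 2
    · subst hk; rw [Finsupp.single_eq_same]
    · rw [Finsupp.single_eq_of_ne' (fun hh => hk hh.symm), hfzero k hk]
  have : y = f (i - 2) := by
    rw [← hsum, hfs, Finsupp.sum_single_index rfl, Finsupp.single_eq_same]
  exact this ▸ hf (i - 2)

end Aux2

section Aux3

set_option linter.unusedSectionVars false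

variable {M : Type} [AddCommGroup M] [Module (LaurentPolynomial ℂ) M]
  [Module ℂ M] [IsScalarTower ℂ (LaurentPolynomial ℂ) M]
  {Mi : ℤ → Submodule ℂ M}

lemma aux_Tn (hdecomp : DirectSum.IsInternal Mi)
    (hz : ∀ i : ℤ, ∀ m ∈ Mi i, (T 1 : LaurentPolynomial ℂ) • m ∈ Mi (i + 2)) :
    ∀ (n i : ℤ) (m : M), m ∈ Mi i → (T n : LaurentPolynomial ℂ) • m ∈ Mi (i + 2 * n) := by
  intro n
  induction n using Int.induction_on with
  | zero => intro i m hm; simpa [T_zero] using hm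
  | succ k ih =>
    intro i m hm
    have h1 : (T ((k : ℤ) + 1) : LaurentPolynomial ℂ) • m
        = (T 1 : LaurentPolynomial ℂ) • (T (k : ℤ) : LaurentPolynomial ℂ) • m := by
      rw [aux_T_smul]; ring_nf
    have h2 := hz _ _ (ih i m hm)
    have he : i + 2 * ((k : ℤ) + 1) = i + 2 * (k : ℤ) + 2 := by ring
    rw [h1, he]; exact h2
  | pred k ih =>
    intro i m hm
    have h1 : (T (-(k : ℤ) - 1) : LaurentPolynomial ℂ) • m
        = (T (-1) : LaurentPolynomial ℂ) • (T (-(k : ℤ)) : LaurentPolynomial ℂ) • m := by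
      rw [aux_T_smul]; ring_nf
    have h2 := ih i m hm
    have h3 : (T 1 : LaurentPolynomial ℂ) •
        ((T (-1) : LaurentPolynomial ℂ) • (T (-(k : ℤ)) : LaurentPolynomial ℂ) • m)
        ∈ Mi (i + 2 * (-(k : ℤ))) := by
      have := aux_T_cancel (a := -1) (M := M)
        ((T (-(k : ℤ)) : LaurentPolynomial ℂ) • m)
      rw [neg_neg] at this
      rw [this]; exact h2
    have h4 := aux_neg hdecomp hz _ _ h3
    have he : i + 2 * (-(k : ℤ) - 1) = i + 2 * (-(k : ℤ)) - 2 := by ring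
    rw [h1, he]; exact h4

lemma aux_smul_sum (p : LaurentPolynomial ℂ) (m : M) :
    p • m = ∑ n ∈ p.coeff.support, p.coeff n • ((T n : LaurentPolynomial ℂ) • m) := by
  conv_lhs => rw [← AddMonoidAlgebra.ofCoeff_coeff p, ← Finsupp.sum_single p.coeff,
    AddMonoidAlgebra.ofCoeff_finsuppSum]
  rw [Finsupp.sum, Finset.sum_smul]
  refine Finset.sum_congr rfl fun n _ => ?_
  rw [AddMonoidAlgebra.ofCoeff_single, single_eq_C_mul_T, mul_smul, C_eq_algebraMap, algebraMap_smul]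

end Aux3

theorem irreducible_K_homogeneous_module
    (M : Type) [AddCommGroup M] [Module (LaurentPolynomial ℂ) M]
    [Module ℂ M] [IsScalarTower ℂ (LaurentPolynomial ℂ) M]
    (hM : ∃ m : M, m ≠ 0)
    (Mi : ℤ → Submodule ℂ M)
    (hdecomp : DirectSum.IsInternal Mi)
    (hz : ∀ i : ℤ, ∀ m ∈ Mi i,
      (LaurentPolynomial.T 1 : LaurentPolynomial ℂ) • m ∈ Mi (i + 2))
    (hirr : ∀ N : Submodule (LaurentPolynomial ℂ) M,
      (N.restrictScalars ℂ = ⨆ i : ℤ, (N.restrictScalars ℂ ⊓ Mi i)) →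
      N = ⊥ ∨ N = ⊤) :
    (∀ i : ℤ, ∀ m ∈ Mi i, m ≠ 0 →
      Function.Bijective (LinearMap.toSpanSingleton (LaurentPolynomial ℂ) M m)) ∧
    (∃ i₀ : ℤ, (i₀ = 0 ∨ i₀ = 1) ∧ ∀ j : ℤ, j % 2 ≠ i₀ % 2 → Mi j = ⊥) := by
  classical
  have hind := hdecomp.submodule_iSupIndep
  -- the reindexed decomposition of p • m
  have hpm : ∀ (p : LaurentPolynomial ℂ) (m : M) (i : ℤ), m ∈ Mi i →
      ∃ g : ℤ →₀ M, (∀ n, g n = p.coeff n • ((T n : LaurentPolynomial ℂ) • m)) ∧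
        (∀ n, g n ∈ Mi (i + 2 * n)) ∧ (g.sum fun _ v => v) = p • m := by
    intro p m i hm
    refine ⟨Finsupp.onFinset p.coeff.support (fun n => p.coeff n • ((T n : LaurentPolynomial ℂ) • m))
      (fun n h => Finsupp.mem_support_iff.mpr (fun h0 => h (by show p.coeff n • _ = 0; rw [h0, zero_smul]))),
      fun n => rfl, fun n => ?_, ?_⟩
    · exact Submodule.smul_mem _ _ (aux_Tn hdecomp hz n i m hm)
    · rw [Finsupp.onFinset_sum _ (fun _ => rfl), aux_smul_sum]
  have hinj2 : ∀ (a : ℤ) (x : M), (T a : LaurentPolynomial ℂ) • x = 0 → x = 0 := by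
    intro a x h
    have := congrArg (fun v => (T (-a) : LaurentPolynomial ℂ) • v) h
    simpa [aux_T_cancel] using this
  have ha : ∀ i : ℤ, ∀ m ∈ Mi i, m ≠ 0 →
      Function.Bijective (LinearMap.toSpanSingleton (LaurentPolynomial ℂ) M m) := by
    intro i m hm hm0
    constructor
    · rw [injective_iff_map_eq_zero]
      intro p hp
      rw [LinearMap.toSpanSingleton_apply] at hp
      obtain ⟨g, hgn, hgmem, hgsum⟩ := hpm p m i hm
      have hkey := aux_key hind g ⟨fun n => i + 2 * n, fun a b h => by
          have h' : i + 2 * a = i + 2 * b := h; omega⟩ hgmem (i + 1) 0 (zero_mem _) (by rw [hgsum, hp])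
      ext n
      by_contra hn
      have h1 : g n = 0 := hkey n (by show i + 2 * n ≠ i + 1; omega)
      rw [hgn n, smul_eq_zero] at h1
      rcases h1 with h1 | h1
      · exact hn (by simpa using h1)
      · exact hm0 (hinj2 n m h1)
    · rw [← LinearMap.range_eq_top]
      set N := LinearMap.range (LinearMap.toSpanSingleton (LaurentPolynomial ℂ) M m) with hN
      have hhom : N.restrictScalars ℂ = ⨆ i : ℤ, (N.restrictScalars ℂ ⊓ Mi i) := by
        refine le_antisymm ?_ (iSup_le fun k => inf_le_left)
        intro x hx
        obtain ⟨p, hp⟩ := hx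
        rw [LinearMap.toSpanSingleton_apply] at hp
        rw [← hp, aux_smul_sum]
        refine Submodule.sum_mem _ fun n _ => ?_
        refine Submodule.mem_iSup_of_mem (i + 2 * n) ?_
        refine Submodule.mem_inf.mpr ⟨?_, ?_⟩
        · exact Submodule.smul_mem _ _ ⟨T n, LinearMap.toSpanSingleton_apply _ _ _ _⟩
        · exact Submodule.smul_mem _ _ (aux_Tn hdecomp hz n i m hm)
      rcases hirr N hhom with h | h
      · exfalso
        have : m ∈ N := ⟨1, by rw [LinearMap.toSpanSingleton_apply, one_smul]⟩
        rw [h] at this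
        exact hm0 (Submodule.mem_bot _ |>.mp this)
      · exact h
  refine ⟨ha, ?_⟩
  obtain ⟨m, hm0⟩ := hM
  obtain ⟨f, hf, hsum⟩ := aux_decomp hdecomp m
  have hex : ∃ i, f i ≠ 0 := by
    by_contra h
    push_neg at h
    apply hm0
    rw [← hsum]
    rw [show f = 0 from Finsupp.ext h, Finsupp.sum_zero_index]
  obtain ⟨i, hfi⟩ := hex
  refine ⟨i % 2, Int.emod_two_eq_zero_or_one i, fun j hj => ?_⟩
  rw [eq_bot_iff]
  intro x hx
  obtain ⟨p, hp⟩ := (ha i (f i) (hf i) hfi).2 x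
  rw [LinearMap.toSpanSingleton_apply] at hp
  obtain ⟨g, hgn, hgmem, hgsum⟩ := hpm p (f i) i (hf i)
  have hkey := aux_key hind g ⟨fun n => i + 2 * n, fun a b h => by
      have h' : i + 2 * a = i + 2 * b := h; omega⟩ hgmem j x hx (by rw [hgsum, hp])
  have hgz : ∀ n, g n = 0 := fun n => hkey n (by show i + 2 * n ≠ j; omega)
  have : x = 0 := by
    rw [← hp, ← hgsum, show g = 0 from Finsupp.ext hgz, Finsupp.sum_zero_index]
  simp [this]
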